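/- arXiv:math/0501373 — 4 statements merged into one kernel-verified Lean document; each statement's English description precedes it below -/
import Mathlib

section
/- Every lattice that is both algebraic and dually algebraic is isomorphic to a direct product of directly indecomposable lattices. -/
universe u

/-- An element `a` of a lattice is *neutral* if every triple `{a, x, y}`
generates a distributive sublattice; we use the standard equational
characterization. -/
def IsNeutral {L : Type*} [Lattice L] (a : L) : Prop :=
  ∀ x y : L, (a ⊔ x) ⊓ (a ⊔ y) ⊓ (x ⊔ y) = (a ⊓ x) ⊔ (a ⊓ y) ⊔ (x ⊓ y)

/-- An element of a bounded lattice is *central* if it is neutral and complemented. -/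
def IsCentral {L : Type*} [Lattice L] [BoundedOrder L] (a : L) : Prop :=
  IsNeutral a ∧ ∃ b : L, a ⊓ b = ⊥ ∧ a ⊔ b = ⊤

/-- `a` is an atom of the center `Cen L`. -/
def IsCenterAtom {L : Type*} [Lattice L] [BoundedOrder L] (a : L) : Prop :=
  IsCentral a ∧ a ≠ ⊥ ∧ ∀ b : L, IsCentral b → b < a → b = ⊥

/-- A bounded lattice is *directly indecomposable* if whenever it is isomorphic to a
product of two bounded lattices, one of the factors is trivial. -/
def DirectlyIndecomposable (M : Type u) [Lattice M] [BoundedOrder M] : Prop :=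
  ∀ A B : BddLat.{u}, Nonempty (M ≃o ↥A × ↥B) → Subsingleton ↥A ∨ Subsingleton ↥B

/-- A bounded lattice is *totally decomposable* if it is isomorphic to a direct product
of directly indecomposable lattices. -/
def TotallyDecomposable (M : Type u) [Lattice M] [BoundedOrder M] : Prop :=
  ∃ (ι : Type u) (F : ι → BddLat.{u}),
    (∀ i, DirectlyIndecomposable ↥(F i)) ∧ Nonempty (M ≃o ∀ i, ↥(F i))

namespace TotDec

variable {L : Type u} [CompleteLattice L]

/-- `(a, b)` is a good (direct-decomposition) pair. -/
def GoodPair {M : Type*} [Lattice M] (a b : M) : Prop :=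
  (∀ x, (x ⊓ a) ⊔ (x ⊓ b) = x) ∧
    ∀ u v, u ≤ a → v ≤ b → (u ⊔ v) ⊓ a = u ∧ (u ⊔ v) ⊓ b = v

namespace GoodPair

variable {M : Type*} [Lattice M] {a b : M}

theorem symm (h : GoodPair a b) : GoodPair b a := by
  refine ⟨fun x => by rw [sup_comm]; exact h.1 x, fun u v hu hv => ?_⟩
  obtain ⟨h1, h2⟩ := h.2 v u hv hu
  rw [sup_comm v u] at h1 h2
  exact ⟨h2, h1⟩

theorem inf_eq_bot [OrderBot M] (h : GoodPair a b) : a ⊓ b = ⊥ := by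
  have := (h.2 ⊥ b bot_le le_rfl).1
  rw [bot_sup_eq] at this
  rw [inf_comm]; exact this

theorem sup_eq_top [OrderTop M] (h : GoodPair a b) : a ⊔ b = ⊤ := by
  have := h.1 ⊤
  rwa [top_inf_eq, top_inf_eq] at this

/-- Central elements distribute over binary joins. -/
theorem sup_inf (h : GoodPair a b) (x y : M) :
    (x ⊔ y) ⊓ a = (x ⊓ a) ⊔ (y ⊓ a) := by
  have hxy : x ⊔ y = ((x ⊓ a) ⊔ (y ⊓ a)) ⊔ ((x ⊓ b) ⊔ (y ⊓ b)) := by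
    conv_lhs => rw [← h.1 x, ← h.1 y]
    exact sup_sup_sup_comm _ _ _ _
  rw [hxy]
  exact (h.2 _ _ (sup_le inf_le_right inf_le_right)
    (sup_le inf_le_right inf_le_right)).1

end GoodPair

/-- Central elements distribute over arbitrary joins. -/
theorem GoodPair.iSup_inf {a b : L} (h : GoodPair a b) {ι : Sort*} (f : ι → L) :
    (⨆ i, f i) ⊓ a = ⨆ i, f i ⊓ a := by
  have hxy : (⨆ i, f i) = (⨆ i, f i ⊓ a) ⊔ (⨆ i, f i ⊓ b) := by
    rw [← iSup_sup_eq]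
    exact (iSup_congr fun i => (h.1 (f i))).symm
  rw [hxy]
  exact (h.2 _ _ (iSup_le fun i => inf_le_right) (iSup_le fun i => inf_le_right)).1

theorem goodPair_bot_top : GoodPair (⊥ : L) ⊤ := by
  constructor
  · intro x; simp
  · intro u v hu hv
    simp [le_bot_iff.mp hu]

theorem GoodPair.sup {a₁ b₁ a₂ b₂ : L} (h₁ : GoodPair a₁ b₁) (h₂ : GoodPair a₂ b₂) :
    GoodPair (a₁ ⊔ a₂) (b₁ ⊓ b₂) := by
  constructor
  · intro x
    refine le_antisymm (sup_le inf_le_left inf_le_left) ?_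
    have hx : (x ⊓ a₁) ⊔ ((x ⊓ b₁ ⊓ a₂) ⊔ (x ⊓ b₁ ⊓ b₂)) = x := by
      rw [h₂.1 (x ⊓ b₁), h₁.1 x]
    calc x = (x ⊓ a₁) ⊔ ((x ⊓ b₁ ⊓ a₂) ⊔ (x ⊓ b₁ ⊓ b₂)) := hx.symm
      _ ≤ _ := by
        refine sup_le ?_ (sup_le ?_ ?_)
        · exact le_sup_of_le_left (inf_le_inf_left x le_sup_left)
        · exact le_sup_of_le_left
            (le_inf (inf_le_left.trans inf_le_left) (inf_le_right.trans le_sup_right))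
        · exact le_sup_of_le_right
            (le_inf (inf_le_left.trans inf_le_left)
              (le_inf (inf_le_left.trans inf_le_right) inf_le_right))
  · intro u v hu hv
    set u₁ := u ⊓ a₁ with hu₁
    set u₂ := u ⊓ b₁ with hu₂
    have hu12 : u₁ ⊔ u₂ = u := h₁.1 u
    have hu2b : u₂ ≤ b₁ := inf_le_right
    have hu2a : u₂ ≤ a₂ := by
      have : u₂ ≤ (a₁ ⊔ a₂) ⊓ b₁ := le_inf (inf_le_left.trans hu) inf_le_right
      rw [h₁.symm.sup_inf a₁ a₂, h₁.inf_eq_bot, bot_sup_eq] at this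
      exact this.trans inf_le_left
    have huv : u ⊔ v = u₁ ⊔ (u₂ ⊔ v) := by rw [← hu12, sup_assoc]
    have h1a : (u ⊔ v) ⊓ a₁ = u₁ := by
      rw [huv]
      exact (h₁.2 u₁ (u₂ ⊔ v) inf_le_right (sup_le hu2b (hv.trans inf_le_left))).1
    have h1b : (u ⊔ v) ⊓ b₁ = u₂ ⊔ v := by
      rw [huv]
      exact (h₁.2 u₁ (u₂ ⊔ v) inf_le_right (sup_le hu2b (hv.trans inf_le_left))).2
    constructor
    · refine le_antisymm ?_ (le_inf le_sup_left hu)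
      set t := (u ⊔ v) ⊓ (a₁ ⊔ a₂) with ht
      have hdt : (t ⊓ a₁) ⊔ (t ⊓ b₁) = t := h₁.1 t
      have h1 : t ⊓ a₁ ≤ u₁ := h1a ▸ inf_le_inf_right a₁ inf_le_left
      have h2 : t ⊓ b₁ ≤ u₂ := by
        have ha : t ⊓ b₁ ≤ u₂ ⊔ v := h1b ▸ inf_le_inf_right b₁ inf_le_left
        have hb : t ⊓ b₁ ≤ a₂ := by
          have : t ⊓ b₁ ≤ (a₁ ⊔ a₂) ⊓ b₁ := inf_le_inf_right b₁ inf_le_right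
          rw [h₁.symm.sup_inf a₁ a₂, h₁.inf_eq_bot, bot_sup_eq] at this
          exact this.trans inf_le_left
        have := le_inf ha hb
        rwa [(h₂.2 u₂ v hu2a (hv.trans inf_le_right)).1] at this
      calc t = (t ⊓ a₁) ⊔ (t ⊓ b₁) := hdt.symm
        _ ≤ u₁ ⊔ u₂ := sup_le_sup h1 h2
        _ = u := hu12
    · refine le_antisymm ?_ (le_inf le_sup_right hv)
      have : (u ⊔ v) ⊓ (b₁ ⊓ b₂) ≤ (u₂ ⊔ v) ⊓ b₂ := by
        rw [← inf_assoc, h1b]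
      rwa [(h₂.2 u₂ v hu2a (hv.trans inf_le_right)).2] at this

theorem goodPair_finsetSup {ι : Type*} (z z' : ι → L) (h : ∀ i, GoodPair (z i) (z' i))
    (F : Finset ι) : GoodPair (F.sup z) (F.inf z') := by
  classical
  induction F using Finset.induction_on with
  | empty => simpa using goodPair_bot_top
  | insert _ _ hx ih =>
    rw [Finset.sup_insert, Finset.inf_insert]
    exact (h _).sup ih

theorem sup_iInf_eq' [IsCompactlyGenerated Lᵒᵈ] {ι : Type*} {g : ι → L}
    (hdir : Directed (· ≥ ·) g) (x : L) : x ⊔ ⨅ i, g i = ⨅ i, x ⊔ g i :=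
  Directed.inf_iSup_eq (α := Lᵒᵈ) (f := fun i => OrderDual.toDual (g i))
    (a := OrderDual.toDual x) hdir

def IsCtr (a : L) : Prop := ∃ b, GoodPair a b

def IsZAtom (p : L) : Prop := IsCtr p ∧ p ≠ ⊥ ∧ ∀ w, IsCtr w → w ≤ p → w = ⊥ ∨ w = p

theorem isCtr_inf {a b : L} (ha : IsCtr a) (hb : IsCtr b) : IsCtr (a ⊓ b) := by
  obtain ⟨a', ha'⟩ := ha
  obtain ⟨b', hb'⟩ := hb
  exact ⟨a' ⊔ b', (ha'.symm.sup hb'.symm).symm⟩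

theorem zatom_inf_eq_bot {p q : L} (hp : IsZAtom p) (hq : IsZAtom q) (hne : p ≠ q) :
    p ⊓ q = ⊥ := by
  rcases hp.2.2 (p ⊓ q) (isCtr_inf hp.1 hq.1) inf_le_left with h | h
  · exact h
  · have hpq : p ≤ q := h ▸ inf_le_right
    rcases hq.2.2 p hp.1 hpq with h1 | h1
    · exact absurd h1 hp.2.1
    · exact absurd h1 hne

theorem inf_finsetSup_le {ι : Type*} (g : ι → L) (F : Finset ι)
    (h : ∀ i ∈ F, IsCtr (g i)) (x : L) :
    x ⊓ F.sup g ≤ F.sup fun i => x ⊓ g i := by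
  classical
  induction F using Finset.induction_on with
  | empty => simp
  | @insert i F hi ih =>
    obtain ⟨b, hb⟩ := h i (F.mem_insert_self i)
    rw [Finset.sup_insert, Finset.sup_insert]
    set t := x ⊓ (g i ⊔ F.sup g) with ht
    have h1 : t = (t ⊓ g i) ⊔ (t ⊓ b) := (hb.1 t).symm
    have h2 : t ⊓ g i ≤ x ⊓ g i := inf_le_inf_right _ inf_le_left
    have h3 : t ⊓ b ≤ x ⊓ F.sup g := by
      refine le_inf ((inf_le_left.trans inf_le_left)) ?_
      have hle : t ⊓ b ≤ (g i ⊔ F.sup g) ⊓ b := inf_le_inf_right _ inf_le_right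
      rw [hb.symm.sup_inf (g i) (F.sup g), hb.inf_eq_bot, bot_sup_eq] at hle
      exact hle.trans inf_le_left
    calc t = (t ⊓ g i) ⊔ (t ⊓ b) := h1
      _ ≤ (x ⊓ g i) ⊔ (F.sup fun j => x ⊓ g j) :=
          sup_le_sup h2 (h3.trans (ih fun j hj => h j (Finset.mem_insert_of_mem hj)))
      _ ≤ _ := le_rfl

theorem subsingleton_of_top_le_bot {M : Type*} [Lattice M] [BoundedOrder M]
    (h : (⊤ : M) ≤ ⊥) : Subsingleton M :=
  ⟨fun x y => le_antisymm ((le_top.trans h).trans bot_le) ((le_top.trans h).trans bot_le)⟩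

/-- Transfer: a good pair inside the interval `[⊥, p]` below a central element `p`
produces a good pair in `L`. -/
theorem goodPair_of_interval {p p' a b : L} (hpp' : GoodPair p p') (ha : a ≤ p) (hb : b ≤ p)
    (hD1 : ∀ u, u ≤ p → (u ⊓ a) ⊔ (u ⊓ b) = u)
    (hD2 : ∀ u v, u ≤ a → v ≤ b → (u ⊔ v) ⊓ a = u ∧ (u ⊔ v) ⊓ b = v) :
    GoodPair a (b ⊔ p') := by
  have hp'p : p' ⊓ p = ⊥ := by
    have := (hpp'.2 ⊥ p' bot_le le_rfl).1
    rw [bot_sup_eq] at this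
    exact this
  have hbp' : (b ⊔ p') ⊓ p = b := by
    rw [hpp'.sup_inf b p', inf_eq_left.mpr hb, hp'p, sup_bot_eq]
  constructor
  · intro x
    have h1 : x ⊓ p ⊓ a = x ⊓ a := by rw [inf_assoc, inf_eq_right.mpr ha]
    have h2 : x ⊓ p ⊓ b = x ⊓ b := by rw [inf_assoc, inf_eq_right.mpr hb]
    refine le_antisymm (sup_le inf_le_left inf_le_left) ?_
    calc x = (x ⊓ p) ⊔ (x ⊓ p') := (hpp'.1 x).symm
      _ = ((x ⊓ a) ⊔ (x ⊓ b)) ⊔ (x ⊓ p') := by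
          rw [← hD1 (x ⊓ p) inf_le_right, h1, h2]
      _ ≤ (x ⊓ a) ⊔ (x ⊓ (b ⊔ p')) := by
          refine sup_le (sup_le le_sup_left ?_) ?_
          · exact le_sup_of_le_right (inf_le_inf_left x le_sup_left)
          · exact le_sup_of_le_right (inf_le_inf_left x le_sup_right)
  · intro u v hu hv
    have hup : u ≤ p := hu.trans ha
    set v₁ := v ⊓ p with hv₁
    set v₂ := v ⊓ p' with hv₂
    have hv1b : v₁ ≤ b := by
      have h := inf_le_inf_right p hv
      rwa [hbp'] at h
    have hvsum : v₁ ⊔ v₂ = v := hpp'.1 v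
    have huv : u ⊔ v = (u ⊔ v₁) ⊔ v₂ := by rw [← hvsum, ← sup_assoc]
    have hD2p := hpp'.2 (u ⊔ v₁) v₂ (sup_le hup (hv1b.trans hb)) inf_le_right
    have huvp : (u ⊔ v) ⊓ p = u ⊔ v₁ := by rw [huv]; exact hD2p.1
    have huvp' : (u ⊔ v) ⊓ p' = v₂ := by rw [huv]; exact hD2p.2
    have hD2ab := hD2 u v₁ hu hv1b
    constructor
    · calc (u ⊔ v) ⊓ a = ((u ⊔ v) ⊓ p) ⊓ a := by rw [inf_assoc, inf_eq_right.mpr ha]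
        _ = (u ⊔ v₁) ⊓ a := by rw [huvp]
        _ = u := hD2ab.1
    · refine le_antisymm ?_ (le_inf le_sup_right hv)
      set t := (u ⊔ v) ⊓ (b ⊔ p') with hts
      have htp : t ⊓ p ≤ v₁ := by
        have hx1 : t ⊓ p ≤ u ⊔ v₁ := by
          have := inf_le_inf_right p (inf_le_left : t ≤ u ⊔ v)
          rwa [huvp] at this
        have hx2 : t ⊓ p ≤ b := by
          have := inf_le_inf_right p (inf_le_right : t ≤ b ⊔ p')
          rwa [hbp'] at this
        have := le_inf hx1 hx2
        rwa [hD2ab.2] at this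
      have htp' : t ⊓ p' ≤ v₂ := by
        have := inf_le_inf_right p' (inf_le_left : t ≤ u ⊔ v)
        rwa [huvp'] at this
      calc t = (t ⊓ p) ⊔ (t ⊓ p') := (hpp'.1 t).symm
        _ ≤ v₁ ⊔ v₂ := sup_le_sup htp htp'
        _ = v := hvsum

theorem zatom_indecomposable {p : L} (hp : IsZAtom p) :
    DirectlyIndecomposable (Set.Iic p) := by
  rintro A B ⟨g⟩
  obtain ⟨p', hpp'⟩ := hp.1
  set e : Set.Iic p := g.symm (⊤, ⊥) with he
  set f : Set.Iic p := g.symm (⊥, ⊤) with hf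
  have hge : g e = (⊤, ⊥) := g.apply_symm_apply _
  have hgf : g f = (⊥, ⊤) := g.apply_symm_apply _
  have hD1' : ∀ u : Set.Iic p, (u ⊓ e) ⊔ (u ⊓ f) = u := by
    intro u
    apply g.injective
    rw [map_sup, map_inf, map_inf, hge, hgf]
    refine Prod.ext ?_ ?_ <;> simp
  have hD2' : ∀ u v : Set.Iic p, u ≤ e → v ≤ f →
      ((u ⊔ v) ⊓ e = u ∧ (u ⊔ v) ⊓ f = v) := by
    intro u v hu hv
    have hu2 : (g u).2 = ⊥ := by
      have : g u ≤ (⊤, ⊥) := hge ▸ g.monotone hu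
      exact le_antisymm this.2 bot_le
    have hv1 : (g v).1 = ⊥ := by
      have : g v ≤ (⊥, ⊤) := hgf ▸ g.monotone hv
      exact le_antisymm this.1 bot_le
    constructor <;> apply g.injective <;>
      rw [map_inf, map_sup] <;> [rw [hge]; rw [hgf]] <;>
      refine Prod.ext ?_ ?_ <;>
      simp [Prod.fst_sup, Prod.snd_sup, hu2, hv1]
  -- transfer down to L
  have hD1 : ∀ u, u ≤ p → (u ⊓ (e : L)) ⊔ (u ⊓ (f : L)) = u := fun u hu =>
    congrArg Subtype.val (hD1' ⟨u, hu⟩)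
  have hD2 : ∀ u v : L, u ≤ (e : L) → v ≤ (f : L) →
      (u ⊔ v) ⊓ (e : L) = u ∧ (u ⊔ v) ⊓ (f : L) = v := by
    intro u v hu hv
    have hup : u ∈ Set.Iic p := le_trans hu e.2
    have hvp : v ∈ Set.Iic p := le_trans hv f.2
    obtain ⟨h1, h2⟩ := hD2' ⟨u, hup⟩ ⟨v, hvp⟩ (Subtype.mk_le_mk.mpr hu) (Subtype.mk_le_mk.mpr hv)
    exact ⟨congrArg Subtype.val h1, congrArg Subtype.val h2⟩
  have hctr : IsCtr (e : L) :=
    ⟨(f : L) ⊔ p', goodPair_of_interval hpp' e.2 f.2 hD1 hD2⟩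
  rcases hp.2.2 (e : L) hctr e.2 with h | h
  · left
    have heb : e = (⊥ : Set.Iic p) := Subtype.ext (by simpa using h)
    have : ((⊤, ⊥) : ↥A × ↥B) = (⊥, ⊥) := by
      rw [← hge, heb, map_bot]
      rfl
    exact subsingleton_of_top_le_bot (congrArg Prod.fst this).le
  · right
    have het : e = (⊤ : Set.Iic p) := Subtype.ext (by simpa using h)
    have : ((⊤, ⊥) : ↥A × ↥B) = (⊤, ⊤) := by
      rw [← hge, het, map_top]
      rfl
    exact subsingleton_of_top_le_bot ((congrArg Prod.snd this).symm.le)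


variable [IsCompactlyGenerated L] [IsCompactlyGenerated Lᵒᵈ]

theorem goodPair_iSup_iInf [IsCompactlyGenerated L] [IsCompactlyGenerated Lᵒᵈ]
    {ι : Type*} {z z' : ι → L} (h : ∀ i, GoodPair (z i) (z' i)) :
    GoodPair (⨆ i, z i) (⨅ i, z' i) := by
  classical
  haveI : Nonempty (Finset ι) := ⟨∅⟩
  have hw : ∀ F : Finset ι, GoodPair (F.sup z) (F.inf z') := goodPair_finsetSup z z' h
  have hsup : (⨆ F : Finset ι, F.sup z) = ⨆ i, z i := by
    rw [iSup_eq_iSup_finset z]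
    exact iSup_congr fun F => Finset.sup_eq_iSup F z
  have hinf : (⨅ F : Finset ι, F.inf z') = ⨅ i, z' i := by
    rw [iInf_eq_iInf_finset z']
    exact iInf_congr fun F => Finset.inf_eq_iInf F z'
  have hdir : Directed (· ≤ ·) (fun F : Finset ι => F.sup z) := fun F G =>
    ⟨F ∪ G, Finset.sup_mono Finset.subset_union_left,
      Finset.sup_mono Finset.subset_union_right⟩
  have hmle : ∀ F : Finset ι, (⨅ i, z' i) ≤ F.inf z' := by
    intro F
    rw [← hinf]; exact iInf_le _ F
  have hsm : ∀ F : Finset ι, (⨅ i, z' i) ⊓ F.sup z = ⊥ := fun F =>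
    le_bot_iff.mp ((inf_le_inf_right _ (hmle F)).trans ((hw F).symm.inf_eq_bot).le)
  constructor
  · intro x
    refine le_antisymm (sup_le inf_le_left inf_le_left) ?_
    have hstep : ∀ F : Finset ι, x ≤ (x ⊓ ⨆ i, z i) ⊔ (x ⊓ F.inf z') := by
      intro F
      calc x = (x ⊓ F.sup z) ⊔ (x ⊓ F.inf z') := ((hw F).1 x).symm
        _ ≤ _ := sup_le_sup_right
            (inf_le_inf_left x (hsup ▸ le_iSup (fun F : Finset ι => F.sup z) F)) _
    have : x ≤ ⨅ F : Finset ι, ((x ⊓ ⨆ i, z i) ⊔ (x ⊓ F.inf z')) := le_iInf hstep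
    have hdir' : Directed (· ≥ ·) (fun F : Finset ι => x ⊓ F.inf z') := fun F G =>
      ⟨F ∪ G, inf_le_inf_left x (Finset.inf_mono Finset.subset_union_left),
        inf_le_inf_left x (Finset.inf_mono Finset.subset_union_right)⟩
    rw [← sup_iInf_eq' hdir'] at this
    rwa [inf_iInf.symm, hinf] at this
  · intro u v hu hv
    constructor
    · refine le_antisymm ?_ (le_inf le_sup_left hu)
      rw [← hsup, Directed.inf_iSup_eq hdir (a := u ⊔ v)]
      refine iSup_le fun F => ?_
      rw [(hw F).sup_inf u v]
      refine sup_le inf_le_left ?_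
      have : v ⊓ F.sup z ≤ (⨅ i, z' i) ⊓ F.sup z := inf_le_inf_right _ hv
      rw [hsm F] at this
      exact this.trans bot_le
    · refine le_antisymm ?_ (le_inf le_sup_right hv)
      have h1 : (u ⊔ v) ⊓ (⨅ i, z' i) = ⨅ F : Finset ι, (u ⊔ v) ⊓ F.inf z' := by
        rw [← hinf, inf_iInf]
      rw [h1]
      have h2 : ∀ F : Finset ι, (u ⊔ v) ⊓ F.inf z' = v ⊔ (u ⊓ F.inf z') := by
        intro F
        rw [(hw F).symm.sup_inf u v, inf_eq_left.mpr (hv.trans (hmle F)), sup_comm]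
      calc (⨅ F : Finset ι, (u ⊔ v) ⊓ F.inf z') = ⨅ F : Finset ι, v ⊔ (u ⊓ F.inf z') :=
            iInf_congr h2
        _ = v ⊔ ⨅ F : Finset ι, (u ⊓ F.inf z') := by
            refine (sup_iInf_eq' (fun F G => ?_) v).symm
            exact ⟨F ∪ G, inf_le_inf_left u (Finset.inf_mono Finset.subset_union_left),
              inf_le_inf_left u (Finset.inf_mono Finset.subset_union_right)⟩
        _ ≤ v := by
            rw [inf_iInf.symm, hinf]
            refine sup_le le_rfl ?_
            have h4 : u ⊓ (⨅ i, z' i) ≤ (⨅ i, z' i) ⊓ ⨆ F : Finset ι, F.sup z :=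
              le_inf inf_le_right (inf_le_left.trans (hu.trans hsup.ge))
            have h3 : (⨅ i, z' i) ⊓ (⨆ F : Finset ι, F.sup z) = ⊥ := by
              rw [Directed.inf_iSup_eq hdir]
              exact le_bot_iff.mp (iSup_le fun F => (hsm F).le)
            rw [h3] at h4
            exact h4.trans bot_le

theorem goodPair_iInf_iSup [IsCompactlyGenerated L] [IsCompactlyGenerated Lᵒᵈ]
    {ι : Type*} {z z' : ι → L} (h : ∀ i, GoodPair (z i) (z' i)) :
    GoodPair (⨅ i, z i) (⨆ i, z' i) :=
  (goodPair_iSup_iInf fun i => (h i).symm).symm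

theorem isCtr_sInf {S : Set L} (hS : ∀ z ∈ S, IsCtr z) :
    ∃ b : S → L, (∀ z : S, GoodPair (z : L) (b z)) ∧ GoodPair (sInf S) (⨆ z : S, b z) := by
  choose b hb using fun z : S => hS z z.2
  refine ⟨b, hb, ?_⟩
  rw [sInf_eq_iInf' S]
  exact goodPair_iInf_iSup hb

theorem exists_zatom {a : L} (ha : IsCtr a) (h0 : a ≠ ⊥) :
    ∃ p, IsZAtom p ∧ p ≤ a := by
  classical
  obtain ⟨c, hcc, hca, hc0⟩ :
      ∃ c, IsCompactElement c ∧ c ≤ a ∧ c ≠ ⊥ := by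
    by_contra hc
    push_neg at hc
    apply h0
    rw [← sSup_compact_le_eq a]
    exact le_bot_iff.mp (sSup_le fun c hcm => (hc c hcm.1 hcm.2).le)
  set T : Set L := {z | IsCtr z ∧ c ≤ z} with hT
  set cstar : L := sInf T with hcstar
  have hctr_cstar : IsCtr cstar := by
    obtain ⟨b, _, hgp⟩ := isCtr_sInf (S := T) fun z hz => hz.1
    exact ⟨_, hgp⟩
  have hccs : c ≤ cstar := le_sInf fun z hz => hz.2
  have hkey : ∀ w, IsCtr w → c ≤ w → cstar ≤ w := fun w h1 h2 => sInf_le ⟨h1, h2⟩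
  have hcsa : cstar ≤ a := hkey a ha hca
  have hcs0 : cstar ≠ ⊥ := fun h => hc0 (le_bot_iff.mp (h ▸ hccs))
  set T' : Set L := {z | IsCtr z ∧ z ≠ ⊥ ∧ z ≤ cstar} with hT'
  have hchains : ∀ C : Set Lᵒᵈ, C ⊆ T' → IsChain (· ≤ ·) C → ∀ y ∈ C,
      ∃ ub ∈ (T' : Set Lᵒᵈ), ∀ z ∈ C, z ≤ ub := by
    intro C hCs hchain y hy
    · -- chains have lower bounds (upper bounds in the dual)
      set C' : Set L := show Set L from C with hC'
      have hCc : ∀ z ∈ C', IsCtr z := fun z hz => (hCs hz).1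
      obtain ⟨b, hb, hgp⟩ := isCtr_sInf (S := C') hCc
      set m : L := sInf C' with hmdef
      have hm_lb : ∀ z ∈ C', m ≤ z := fun z hz => sInf_le hz
      refine ⟨OrderDual.toDual m, ⟨⟨_, hgp⟩, ?_, (hm_lb y hy).trans (hCs hy).2.2⟩,
        fun z hz => hm_lb z hz⟩
      -- m ≠ ⊥
      intro hmbot
      have hmbot' : m = (⊥ : L) := hmbot
      have htop : (⨆ z : C', b z) = ⊤ := by
        have h1 := hgp.1 ⊤
        rw [hmbot'] at h1
        simpa using h1
      have hcle : c ≤ ⨆ z : C', b z := htop ▸ le_top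
      obtain ⟨F, hF⟩ := (CompleteLattice.isCompactElement_iff_exists_le_iSup_of_le_iSup c).1 hcc _ _ hcle
      have hFne : F.Nonempty := by
        rcases F.eq_empty_or_nonempty with rfl | h
        · rw [Finset.sup_empty] at hF; exact absurd (le_bot_iff.mp hF) hc0
        · exact h
      have hgpF : GoodPair (F.sup b) (F.inf (fun z => (z : L))) :=
        goodPair_finsetSup b (fun z => (z : L)) (fun z => (hb z).symm) F
      obtain ⟨z₀, hz₀F, hz₀min⟩ := F.exists_minimal hFne
      have hz₀le : (z₀ : L) ≤ F.inf (fun z => (z : L)) := by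
        refine Finset.le_inf fun w hwF => ?_
        rcases eq_or_ne w z₀ with rfl | hne
        · exact le_rfl
        · have hcomp := hchain w.2 z₀.2 (fun hh => hne (Subtype.ext hh))
          rcases hcomp with h1 | h1
          · -- w ≤ z₀ in Lᵒᵈ, i.e. z₀ ≤ w in L
            exact h1
          · -- z₀ ≤ w in Lᵒᵈ, i.e. w ≤ z₀ in L; minimality forces equality
            have h1' : (w : L) ≤ (z₀ : L) := h1
            have hnlt : ¬ (w : L) < (z₀ : L) := fun hlt =>
              lt_irrefl _ ((Subtype.coe_lt_coe.mp hlt).trans_le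
                (hz₀min hwF (Subtype.coe_lt_coe.mp hlt).le))
            exact (h1'.lt_or_eq.resolve_left hnlt).ge
      have hz₀cs : (z₀ : L) ≤ cstar := (hCs z₀.2).2.2
      have hcsup : cstar ≤ F.sup b := hkey _ ⟨_, hgpF⟩ hF
      have : (z₀ : L) ≤ ⊥ := by
        have := le_inf (hz₀cs.trans hcsup) hz₀le
        rwa [hgpF.inf_eq_bot] at this
      exact (hCs z₀.2).2.1 (le_bot_iff.mp this)
  have hzorn : ∃ p ∈ T', ∀ z ∈ T', z ≤ p → z = p := by
    obtain ⟨m, -, hmax⟩ :=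
      zorn_le_nonempty₀ (α := Lᵒᵈ) T' hchains cstar ⟨hctr_cstar, hcs0, le_rfl⟩
    exact ⟨m, hmax.1, fun z hz hzm => le_antisymm hzm (hmax.2 hz hzm)⟩
  obtain ⟨p, hpT, hpmin⟩ := hzorn
  refine ⟨p, ⟨hpT.1, hpT.2.1, fun w hw hwp => ?_⟩, hpT.2.2.trans hcsa⟩
  rcases eq_or_ne w ⊥ with rfl | hw0
  · exact Or.inl rfl
  · exact Or.inr (hpmin w ⟨hw, hw0, hwp.trans hpT.2.2⟩ hwp)

theorem goodPair_sSup {S : Set L} (hS : ∀ z ∈ S, IsCtr z) :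
    ∃ b : S → L, (∀ z : S, GoodPair (z : L) (b z)) ∧ GoodPair (sSup S) (⨅ z : S, b z) := by
  choose b hb using fun z : S => hS z z.2
  refine ⟨b, hb, ?_⟩
  rw [sSup_eq_iSup' S]
  exact goodPair_iSup_iInf hb

theorem sSup_zatoms_eq_top : sSup {p : L | IsZAtom p} = ⊤ := by
  classical
  obtain ⟨b, hb, hgp⟩ := goodPair_sSup (S := {p : L | IsZAtom p}) (fun z hz => hz.1)
  set s : L := sSup {p : L | IsZAtom p} with hs
  set m : L := ⨅ z : {p : L | IsZAtom p}, b z with hm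
  rcases eq_or_ne m ⊥ with hmb | hm0
  · have h1 := hgp.1 ⊤
    rw [hmb] at h1
    have h2 : s = ⊤ := by
      refine le_antisymm le_top ?_
      calc (⊤ : L) = ⊤ ⊓ s ⊔ ⊤ ⊓ ⊥ := h1.symm
        _ ≤ s := sup_le inf_le_right (inf_le_right.trans bot_le)
    exact h2
  · exfalso
    obtain ⟨q, hq, hqm⟩ := exists_zatom ⟨s, hgp.symm⟩ hm0
    have hqs : q ≤ s := le_sSup hq
    have : q ≤ s ⊓ m := le_inf hqs hqm
    rw [hgp.inf_eq_bot] at this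
    exact hq.2.1 (le_bot_iff.mp this)

theorem iSup_inf_zatom_eq (x : L) :
    (⨆ p : {p : L // IsZAtom p}, x ⊓ p.val) = x := by
  classical
  refine le_antisymm (iSup_le fun p => inf_le_left) ?_
  rw [le_iff_compact_le_imp]
  intro c hc hcx
  have htop : (⨆ p : {p : L // IsZAtom p}, p.val) = ⊤ := by
    rw [← sSup_zatoms_eq_top (L := L), sSup_eq_iSup' {p : L | IsZAtom p}]
    rfl
  obtain ⟨F, hF⟩ := (CompleteLattice.isCompactElement_iff_exists_le_iSup_of_le_iSup c).1 hc _
    (fun p : {p : L // IsZAtom p} => p.val) (le_top.trans htop.ge)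
  calc c ≤ x ⊓ F.sup (fun p => p.val) := le_inf hcx hF
    _ ≤ F.sup (fun p => x ⊓ p.val) := inf_finsetSup_le _ F (fun p _ => p.2.1) x
    _ ≤ ⨆ p : {p : L // IsZAtom p}, x ⊓ p.val :=
        Finset.sup_le fun p _ => le_iSup (fun p : {p : L // IsZAtom p} => x ⊓ p.val) p

theorem iSup_pi_inf (f : ∀ p : {p : L // IsZAtom p}, Set.Iic p.val)
    (p : {p : L // IsZAtom p}) :
    (⨆ q : {p : L // IsZAtom p}, ((f q : L))) ⊓ p.val = (f p : L) := by
  classical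
  obtain ⟨b, hb⟩ := p.2.1
  rw [hb.iSup_inf]
  refine le_antisymm (iSup_le fun q => ?_) (le_iSup_of_le p (le_inf le_rfl (f p).2))
  by_cases hqp : q = p
  · subst hqp; exact inf_le_left
  · have h1 : (f q : L) ⊓ p.val ≤ q.val ⊓ p.val := inf_le_inf_right _ (f q).2
    rw [zatom_inf_eq_bot q.2 p.2 (fun hh => hqp (Subtype.ext hh))] at h1
    exact h1.trans bot_le

noncomputable def theIso : L ≃o ∀ p : {p : L // IsZAtom p}, Set.Iic p.val where
  toFun x := fun p => ⟨x ⊓ p.val, inf_le_right⟩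
  invFun f := ⨆ q : {p : L // IsZAtom p}, (f q : L)
  left_inv x := iSup_inf_zatom_eq x
  right_inv f := funext fun p => Subtype.ext (iSup_pi_inf f p)
  map_rel_iff' := by
    intro x y
    constructor
    · intro h
      have h1 : (⨆ p : {p : L // IsZAtom p}, x ⊓ p.val) ≤
          ⨆ p : {p : L // IsZAtom p}, y ⊓ p.val := iSup_mono fun p => h p
      rwa [iSup_inf_zatom_eq, iSup_inf_zatom_eq] at h1
    · intro h p
      exact Subtype.mk_le_mk.mpr (inf_le_inf_right _ h)


end TotDec

/-- Every algebraic and dually algebraic lattice is isomorphic to a direct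
product of directly indecomposable lattices. -/
theorem totallyDecomposable_of_algebraic_duallyAlgebraic {L : Type u} [CompleteLattice L]
    [IsCompactlyGenerated L] [IsCompactlyGenerated Lᵒᵈ] :
    TotallyDecomposable L := by
  classical
  refine ⟨{p : L // TotDec.IsZAtom p}, fun p => BddLat.of (Set.Iic p.val), ?_, ?_⟩
  · intro p
    exact TotDec.zatom_indecomposable p.2
  · exact ⟨TotDec.theIso⟩
end

section
/- Let D be the set of subsets of ω+1 = ω ∪ {ω} consisting of all finite subsets of ω together with all sets of the form x ∪ {ω} with x ⊆ ω. Then D, ordered by inclusion, is a complete, atomistic, distributive lattice (a closure system in the powerset of ω+1, with finite joins given by union), its center consists exactly of the finite subsets of ω and the sets x ∪ {ω} with x ⊆ ω cofinite, and Cen(D) is not a complete sublattice of D; in particular D is not totally decomposable. -/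
universe u

/-- The closed sets of the interval topology on `ω + 1` (here modelled on
`Option ℕ`, with `none` playing the role of the point `ω`): all finite subsets
of `ω` together with all sets containing the point `ω`. -/
def OmegaClosed : Type := {s : Set (Option ℕ) // Option.none ∈ s ∨ s.Finite}

namespace OmegaClosed

instance : PartialOrder OmegaClosed := Subtype.partialOrder _

instance : InfSet OmegaClosed :=
  ⟨fun S => ⟨⋂ s ∈ S, s.val, by
    by_cases h : ∀ s ∈ S, Option.none ∈ s.val
    · exact Or.inl (by simpa using h)
    · push_neg at h
      obtain ⟨s₀, hs₀S, hs₀⟩ := h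
      refine Or.inr (Set.Finite.subset ?_ (Set.biInter_subset_of_mem hs₀S))
      exact s₀.2.resolve_left hs₀⟩⟩

noncomputable instance : CompleteLattice OmegaClosed :=
  completeLatticeOfInf OmegaClosed (by
    intro S
    constructor
    · intro s hs
      show (sInf S).val ⊆ s.val
      exact Set.biInter_subset_of_mem hs
    · intro t ht
      show t.val ⊆ (sInf S).val
      exact Set.subset_iInter₂ fun s hs => ht hs)

def mk (s : Set (Option ℕ)) (h : Option.none ∈ s ∨ s.Finite) : OmegaClosed := ⟨s, h⟩

@[simp] lemma mk_val (s h) : (mk s h).val = s := rfl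

lemma le_def {x y : OmegaClosed} : x ≤ y ↔ x.val ⊆ y.val := Iff.rfl

lemma ext' {x y : OmegaClosed} (h : x.val = y.val) : x = y := Subtype.ext h

lemma sInf_val (S : Set OmegaClosed) : (sInf S).val = ⋂ s ∈ S, s.val := rfl

lemma union_closed (x y : OmegaClosed) :
    Option.none ∈ (x.val ∪ y.val) ∨ (x.val ∪ y.val).Finite := by
  rcases x.2 with hx | hx
  · exact Or.inl (Or.inl hx)
  · rcases y.2 with hy | hy
    · exact Or.inl (Or.inr hy)
    · exact Or.inr (hx.union hy)

lemma bot_val : (⊥ : OmegaClosed).val = ∅ := by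
  have h : (⊥ : OmegaClosed) ≤ mk ∅ (Or.inr Set.finite_empty) := bot_le
  exact Set.eq_empty_of_subset_empty h

lemma top_val : (⊤ : OmegaClosed).val = Set.univ := by
  have h : mk Set.univ (Or.inl trivial) ≤ (⊤ : OmegaClosed) := le_top
  exact Set.eq_univ_of_univ_subset h

lemma sup_val (x y : OmegaClosed) : (x ⊔ y).val = x.val ∪ y.val := by
  apply subset_antisymm
  · have : x ⊔ y ≤ ⟨x.val ∪ y.val, union_closed x y⟩ :=
      sup_le (le_def.2 Set.subset_union_left) (le_def.2 Set.subset_union_right)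
    exact this
  · exact Set.union_subset (le_def.1 le_sup_left) (le_def.1 le_sup_right)

lemma inter_closed (x y : OmegaClosed) :
    Option.none ∈ (x.val ∩ y.val) ∨ (x.val ∩ y.val).Finite := by
  rcases x.2 with hx | hx
  · rcases y.2 with hy | hy
    · exact Or.inl ⟨hx, hy⟩
    · exact Or.inr (hy.subset Set.inter_subset_right)
  · exact Or.inr (hx.subset Set.inter_subset_left)

lemma inf_val (x y : OmegaClosed) : (x ⊓ y).val = x.val ∩ y.val := by
  apply subset_antisymm
  · exact Set.subset_inter (le_def.1 inf_le_left) (le_def.1 inf_le_right)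
  · have : mk (x.val ∩ y.val) (inter_closed x y) ≤ x ⊓ y :=
      le_inf (le_def.2 Set.inter_subset_left) (le_def.2 Set.inter_subset_right)
    exact this

lemma distrib (x y z : OmegaClosed) : x ⊓ (y ⊔ z) = (x ⊓ y) ⊔ (x ⊓ z) := by
  apply ext'
  rw [inf_val, sup_val, sup_val, inf_val, inf_val, Set.inter_union_distrib_left]

/-- the singleton of a point -/
def pt (p : Option ℕ) : OmegaClosed :=
  mk {p} (by
    cases p with
    | none => exact Or.inl rfl
    | some n => exact Or.inr (Set.finite_singleton _))

lemma pt_atom (p : Option ℕ) : IsAtom (pt p) := by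
  constructor
  · intro h
    have := congrArg Subtype.val h
    rw [bot_val] at this
    exact Set.singleton_ne_empty p this
  · intro b hb
    apply ext'
    rw [bot_val]
    rcases Set.subset_singleton_iff_eq.1 (le_def.1 hb.1) with h | h
    · exact h
    · exact absurd (ext' (x := b) (y := pt p) h) hb.ne

lemma atomistic (x : OmegaClosed) : x = sSup {a : OmegaClosed | IsAtom a ∧ a ≤ x} := by
  apply le_antisymm
  · intro p hp
    have h1 : pt p ≤ sSup {a : OmegaClosed | IsAtom a ∧ a ≤ x} :=
      le_sSup ⟨pt_atom p, le_def.2 (Set.singleton_subset_iff.2 hp)⟩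
    exact le_def.1 h1 rfl
  · exact sSup_le fun a ha => ha.2


lemma neutral_all (a : OmegaClosed) : IsNeutral a := by
  intro x y
  apply ext'
  simp only [inf_val, sup_val]
  ext p
  simp only [Set.mem_inter_iff, Set.mem_union]
  tauto

lemma compl_of (x y : OmegaClosed) (h1 : x ⊓ y = ⊥) (h2 : x ⊔ y = ⊤) :
    y.val = x.valᶜ := by
  have h1' : x.val ∩ y.val = ∅ := by rw [← inf_val, h1, bot_val]
  have h2' : x.val ∪ y.val = Set.univ := by rw [← sup_val, h2, top_val]
  ext p
  constructor
  · intro hp hpx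
    have : p ∈ x.val ∩ y.val := ⟨hpx, hp⟩
    rw [h1'] at this
    exact this
  · intro hp
    have : p ∈ x.val ∪ y.val := h2' ▸ Set.mem_univ p
    exact this.resolve_left hp

lemma central_iff (x : OmegaClosed) :
    IsCentral x ↔ (Option.none ∉ x.val ∨ x.valᶜ.Finite) := by
  constructor
  · rintro ⟨-, y, h1, h2⟩
    have hy := compl_of x y h1 h2
    rcases y.2 with h | h
    · rw [hy] at h; exact Or.inl h
    · rw [hy] at h; exact Or.inr h
  · intro h
    refine ⟨neutral_all x, mk x.valᶜ h, ?_, ?_⟩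
    · apply ext'
      rw [inf_val, mk_val, bot_val, Set.inter_compl_self]
    · apply ext'
      rw [sup_val, mk_val, top_val, Set.union_compl_self]

lemma center_not_complete :
    ¬(∀ S : Set OmegaClosed, (∀ a ∈ S, IsCentral a) →
        IsCentral (sSup S) ∧ IsCentral (sInf S)) := by
  intro h
  set S : Set OmegaClosed := Set.range (fun n : ℕ => pt (Option.some (2*n))) with hS
  have hcen : ∀ a ∈ S, IsCentral a := by
    rintro a ⟨n, rfl⟩
    rw [central_iff]
    left
    simp [pt]
  have hc := (h S hcen).1
  rw [central_iff] at hc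
  have hsub : ∀ n : ℕ, Option.some (2*n) ∈ (sSup S).val := fun n =>
    le_def.1 (le_sSup (Set.mem_range.mpr ⟨n, rfl⟩)) rfl
  have hinf : (sSup S).val.Infinite :=
    Set.infinite_of_injective_forall_mem (f := fun n : ℕ => Option.some (2*n))
      (fun a b hab => by simp only [Option.some.injEq] at hab; omega) hsub
  have hnone : Option.none ∈ (sSup S).val := (sSup S).2.resolve_right hinf
  have hle : sSup S ≤ mk ({Option.none} ∪ {x | ∃ n : ℕ, x = Option.some (2*n)})
      (Or.inl (Or.inl rfl)) := by
    apply sSup_le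
    rintro a ⟨n, rfl⟩
    intro p hp
    exact Or.inr ⟨n, hp⟩
  have hoddc : ∀ k : ℕ, Option.some (2*k+1) ∈ (sSup S).valᶜ := by
    intro k hk
    rcases hle hk with h' | ⟨n, hn⟩
    · simp at h'
    · simp only [Option.some.injEq] at hn; omega
  rcases hc with h' | h'
  · exact h' hnone
  · exact (Set.infinite_of_injective_forall_mem (f := fun k : ℕ => Option.some (2*k+1))
      (fun a b hab => by simp only [Option.some.injEq] at hab; omega) hoddc) h'


lemma not_totally_decomposable : ¬ TotallyDecomposable OmegaClosed := by
  classical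
  rintro ⟨ι, F, hind, ⟨e⟩⟩
  let E : ι → ∀ k, ↥(F k) := fun i => Function.update ⊥ i ⊤
  let c : ι → OmegaClosed := fun i => e.symm (E i)
  have hEc : ∀ i, e (c i) = E i := fun i => e.apply_symm_apply _
  have key : ∀ i, Option.none ∉ (c i).val := by
    intro i hni
    let d : OmegaClosed := e.symm (Function.update (⊤ : ∀ k, ↥(F k)) i ⊥)
    have hinfp : E i ⊓ Function.update (⊤ : ∀ k, ↥(F k)) i ⊥ = (⊥ : ∀ k, ↥(F k)) := by
      funext j
      by_cases h : j = i
      · subst h; simp [E]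
      · simp [E, Function.update_of_ne h]
    have hsupp : E i ⊔ Function.update (⊤ : ∀ k, ↥(F k)) i ⊥ = (⊤ : ∀ k, ↥(F k)) := by
      funext j
      by_cases h : j = i
      · subst h; simp [E]
      · simp [E, Function.update_of_ne h]
    have hinf : c i ⊓ d = ⊥ := by
      rw [show c i ⊓ d = e.symm (E i ⊓ Function.update (⊤ : ∀ k, ↥(F k)) i ⊥) from
        (map_inf e.symm _ _).symm, hinfp, map_bot]
    have hsup : c i ⊔ d = ⊤ := by
      rw [show c i ⊔ d = e.symm (E i ⊔ Function.update (⊤ : ∀ k, ↥(F k)) i ⊥) from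
        (map_sup e.symm _ _).symm, hsupp, map_top]
    have hd : d.val = (c i).valᶜ := compl_of _ _ hinf hsup
    have hcf : (c i).valᶜ.Finite := by
      rcases d.2 with h | h
      · rw [hd] at h; exact absurd hni h
      · rwa [hd] at h
    obtain ⟨m, hm⟩ : ∃ m : ℕ, Option.some m ∈ (c i).val := by
      by_contra hno
      push_neg at hno
      exact (Set.infinite_of_injective_forall_mem
        (f := fun n : ℕ => (Option.some n : Option ℕ))
        (fun a b hab => by simpa using hab) (fun n => hno n)) hcf
    let u : OmegaClosed := pt (Option.some m)
    have hvmem : Option.none ∈ (c i).val \ {Option.some m} ∨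
        ((c i).val \ {Option.some m}).Finite :=
      Or.inl ⟨hni, by simp⟩
    let v : OmegaClosed := mk ((c i).val \ {Option.some m}) hvmem
    have hu : u ≤ c i := le_def.2 (Set.singleton_subset_iff.2 hm)
    have hv : v ≤ c i := le_def.2 Set.diff_subset
    -- iso1 : F i ≃o Iic (c i)
    let φ : ↥(F i) → Set.Iic (c i) := fun a =>
      ⟨e.symm (Function.update (⊥ : ∀ k, ↥(F k)) i a), by
        have h1 : Function.update (⊥ : ∀ k, ↥(F k)) i a ≤ E i := by
          intro j
          by_cases h : j = i
          · subst h; simp [E]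
          · simp [E, Function.update_of_ne h]
        exact e.symm.monotone h1⟩
    let ψ : Set.Iic (c i) → ↥(F i) := fun x => e x.val i
    have hli : Function.LeftInverse ψ φ := by
      intro a
      show e (e.symm (Function.update (⊥ : ∀ k, ↥(F k)) i a)) i = a
      rw [e.apply_symm_apply]
      simp
    have hri : Function.RightInverse ψ φ := by
      rintro ⟨x, hx⟩
      apply Subtype.ext
      show e.symm (Function.update (⊥ : ∀ k, ↥(F k)) i (e x i)) = x
      apply e.injective
      rw [e.apply_symm_apply]
      funext j
      by_cases h : j = i
      · subst h; simp
      · have hxE : e x ≤ E i := by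
          rw [← hEc i]; exact e.monotone hx
        have hb : e x j ≤ (⊥ : ↥((F j))) := by
          have h2 := hxE j
          simpa [E, Function.update_of_ne h] using h2
        simp [Function.update_of_ne h, le_bot_iff.1 hb]
    have hrel : ∀ a b : ↥(F i), φ a ≤ φ b ↔ a ≤ b := by
      intro a b
      constructor
      · intro hab
        have h1 : e.symm (Function.update (⊥ : ∀ k, ↥(F k)) i a) ≤
            e.symm (Function.update (⊥ : ∀ k, ↥(F k)) i b) := hab
        have h2 : Function.update (⊥ : ∀ k, ↥(F k)) i a ≤ Function.update (⊥ : ∀ k, ↥(F k)) i b :=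
          e.symm.le_iff_le.1 h1
        have := h2 i
        simpa using this
      · intro hab
        show e.symm _ ≤ e.symm _
        apply e.symm.monotone
        intro j
        by_cases h : j = i
        · subst h; simpa using hab
        · simp [Function.update_of_ne h]
    let iso1 : ↥(F i) ≃o Set.Iic (c i) :=
      { toFun := φ, invFun := ψ, left_inv := hli, right_inv := hri,
        map_rel_iff' := hrel _ _ }
    -- iso2 : Iic (c i) ≃o Iic u × Iic v
    have hsplit : ∀ x : OmegaClosed, x ≤ c i → (x ⊓ u) ⊔ (x ⊓ v) = x := by
      intro x hx
      apply ext'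
      rw [sup_val, inf_val, inf_val]
      ext p
      simp only [Set.mem_union, Set.mem_inter_iff]
      constructor
      · rintro (⟨h1, -⟩ | ⟨h1, -⟩) <;> exact h1
      · intro hp
        by_cases h : p = Option.some m
        · exact Or.inl ⟨hp, h⟩
        · exact Or.inr ⟨hp, le_def.1 hx hp, h⟩
    have hmeetu : ∀ (p : Set.Iic u) (q : Set.Iic v),
        (p.val ⊔ q.val) ⊓ u = p.val := by
      intro p q
      apply ext'
      rw [inf_val, sup_val]
      ext z
      simp only [Set.mem_inter_iff, Set.mem_union]
      constructor
      · rintro ⟨h1 | h1, h2⟩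
        · exact h1
        · exact absurd (le_def.1 q.2 h1).2 (by simpa [u, pt] using h2)
      · intro hz
        exact ⟨Or.inl hz, le_def.1 p.2 hz⟩
    have hmeetv : ∀ (p : Set.Iic u) (q : Set.Iic v),
        (p.val ⊔ q.val) ⊓ v = q.val := by
      intro p q
      apply ext'
      rw [inf_val, sup_val]
      ext z
      simp only [Set.mem_inter_iff, Set.mem_union]
      constructor
      · rintro ⟨h1 | h1, h2⟩
        · have := le_def.1 p.2 h1
          simp only [u, pt, mk_val, Set.mem_singleton_iff] at this
          exact absurd this h2.2
        · exact h1
      · intro hz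
        exact ⟨Or.inr hz, le_def.1 q.2 hz⟩
    let θ : Set.Iic (c i) → Set.Iic u × Set.Iic v := fun x =>
      (⟨x.val ⊓ u, Set.mem_Iic.mpr inf_le_right⟩, ⟨x.val ⊓ v, Set.mem_Iic.mpr inf_le_right⟩)
    let ρ : Set.Iic u × Set.Iic v → Set.Iic (c i) := fun p =>
      ⟨p.1.val ⊔ p.2.val, Set.mem_Iic.mpr
        (sup_le (le_trans (Set.mem_Iic.mp p.1.2) hu) (le_trans (Set.mem_Iic.mp p.2.2) hv))⟩
    have hli2 : Function.LeftInverse ρ θ := by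
      rintro ⟨x, hx⟩
      exact Subtype.ext (hsplit x hx)
    have hri2 : Function.RightInverse ρ θ := by
      rintro ⟨p, q⟩
      refine Prod.ext (Subtype.ext ?_) (Subtype.ext ?_)
      · exact hmeetu p q
      · exact hmeetv p q
    have hrel2 : ∀ a b : Set.Iic (c i), θ a ≤ θ b ↔ a ≤ b := by
      intro a b
      constructor
      · rintro ⟨h1, h2⟩
        have h1' : a.val ⊓ u ≤ b.val ⊓ u := h1
        have h2' : a.val ⊓ v ≤ b.val ⊓ v := h2
        have : (a.val ⊓ u) ⊔ (a.val ⊓ v) ≤ (b.val ⊓ u) ⊔ (b.val ⊓ v) :=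
          sup_le_sup h1' h2'
        rw [hsplit a.val a.2, hsplit b.val b.2] at this
        exact this
      · intro hab
        exact ⟨inf_le_inf_right u hab, inf_le_inf_right v hab⟩
    let iso2 : Set.Iic (c i) ≃o Set.Iic u × Set.Iic v :=
      { toFun := θ, invFun := ρ, left_inv := hli2, right_inv := hri2,
        map_rel_iff' := hrel2 _ _ }
    rcases hind i (BddLat.of (Set.Iic u)) (BddLat.of (Set.Iic v))
      ⟨iso1.trans iso2⟩ with hs | hs
    · have : (⟨⊥, Set.mem_Iic.mpr bot_le⟩ : Set.Iic u) = ⟨u, Set.mem_Iic.mpr le_rfl⟩ := hs.elim _ _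
      have hval := congrArg (fun z => (Subtype.val z : OmegaClosed).val) this
      simp only [bot_val] at hval
      have : Option.some m ∈ (∅ : Set (Option ℕ)) := by
        rw [hval]; exact rfl
      exact this
    · have : (⟨⊥, Set.mem_Iic.mpr bot_le⟩ : Set.Iic v) = ⟨v, Set.mem_Iic.mpr le_rfl⟩ := hs.elim _ _
      have hval := congrArg (fun z => (Subtype.val z : OmegaClosed).val) this
      simp only [bot_val] at hval
      have : Option.none ∈ (∅ : Set (Option ℕ)) := by
        rw [hval]; exact ⟨hni, by simp⟩
      exact this
  -- final contradiction
  let N : OmegaClosed := pt Option.none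
  have hN : ∀ j, e N j = ⊥ := by
    intro j
    have h0 : N ⊓ c j = ⊥ := by
      apply ext'
      rw [inf_val, bot_val]
      ext p
      simp only [Set.mem_inter_iff, Set.mem_empty_iff_false, iff_false, not_and]
      rintro rfl
      · exact key j
    have h1 : e N ⊓ E j = (⊥ : ∀ k, ↥(F k)) := by
      rw [← hEc j, ← map_inf, h0, map_bot]
    have h2 := congrFun h1 j
    simpa [E] using h2
  have heN : e N = ⊥ := funext hN
  have : N = ⊥ := e.injective (by rw [heN, map_bot])
  have hval := congrArg Subtype.val this
  rw [bot_val] at hval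
  exact Set.singleton_ne_empty _ hval

end OmegaClosed

/-- The lattice `D` of closed subsets of `ω + 1` is a complete, atomistic,
distributive lattice in which finite joins are unions and arbitrary meets are
intersections; its center consists exactly of the finite subsets of `ω` and the
sets `x ∪ {ω}` with `x` cofinite in `ω`; its center is not a complete
sublattice, and `D` is not totally decomposable. -/
theorem omegaClosed_counterexample :
    (∀ S : Set OmegaClosed, (sInf S).val = ⋂ s ∈ S, s.val) ∧
    (∀ x y : OmegaClosed, (x ⊔ y).val = x.val ∪ y.val) ∧
    (∀ x y z : OmegaClosed, x ⊓ (y ⊔ z) = (x ⊓ y) ⊔ (x ⊓ z)) ∧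
    (∀ x : OmegaClosed, x = sSup {a : OmegaClosed | IsAtom a ∧ a ≤ x}) ∧
    (∀ x : OmegaClosed, IsCentral x ↔ (Option.none ∉ x.val ∨ x.valᶜ.Finite)) ∧
    ¬(∀ S : Set OmegaClosed, (∀ a ∈ S, IsCentral a) →
        IsCentral (sSup S) ∧ IsCentral (sInf S)) ∧
    ¬TotallyDecomposable OmegaClosed :=
  ⟨OmegaClosed.sInf_val, OmegaClosed.sup_val, OmegaClosed.distrib, OmegaClosed.atomistic,
    OmegaClosed.central_iff, OmegaClosed.center_not_complete,
    OmegaClosed.not_totally_decomposable⟩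
end

section
/- Let A be an upper continuous complete lattice. Then the lattice Sp(A) of algebraic subsets of A (subsets closed under arbitrary meets, containing the top by the empty meet, and closed under nonempty up-directed joins), ordered by inclusion, is join-semidistributive: X ∨ Y = X ∨ Z implies X ∨ Y = X ∨ (Y ∧ Z) for all X, Y, Z ∈ Sp(A). -/
/-- A subset of a complete lattice is *algebraic* if it is closed under arbitrary
meets (in particular it contains the top, as the empty meet) and under joins of
nonempty up-directed subsets. -/
def IsAlgebraicSubset {A : Type*} [CompleteLattice A] (X : Set A) : Prop :=
  (∀ S : Set A, S ⊆ X → sInf S ∈ X) ∧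
    (∀ S : Set A, S ⊆ X → S.Nonempty → DirectedOn (· ≤ ·) S → sSup S ∈ X)

/-- `Sp A`: the lattice of algebraic subsets of a complete lattice `A`,
ordered by inclusion. -/
def Sp (A : Type*) [CompleteLattice A] : Type _ :=
  {X : Set A // IsAlgebraicSubset X}

namespace Sp

variable {A : Type*} [CompleteLattice A]

instance : PartialOrder (Sp A) := Subtype.partialOrder _

instance : InfSet (Sp A) :=
  ⟨fun 𝒮 => ⟨⋂ X ∈ 𝒮, X.val, by
    constructor
    · intro S hS
      simp only [Set.mem_iInter]
      intro X hX
      exact X.2.1 S (hS.trans (Set.biInter_subset_of_mem hX))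
    · intro S hS hne hdir
      simp only [Set.mem_iInter]
      intro X hX
      exact X.2.2 S (hS.trans (Set.biInter_subset_of_mem hX)) hne hdir⟩⟩

noncomputable instance : CompleteLattice (Sp A) :=
  completeLatticeOfInf (Sp A) (by
    intro 𝒮
    constructor
    · intro X hX
      show (sInf 𝒮).val ⊆ X.val
      exact Set.biInter_subset_of_mem hX
    · intro Y hY
      show Y.val ⊆ (sInf 𝒮).val
      exact Set.subset_iInter₂ fun X hX => hY hX)

end Sp

namespace SpAux

variable {A : Type*} [CompleteLattice A]

noncomputable def cl (X : Set A) (a : A) : A := sInf {x | x ∈ X ∧ a ≤ x}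

lemma le_cl (X : Set A) (a : A) : a ≤ cl X a := le_sInf fun _ hx => hx.2

lemma cl_mem {X : Set A} (hX : IsAlgebraicSubset X) (a : A) : cl X a ∈ X :=
  hX.1 _ fun _ hx => hx.1

lemma cl_mono (X : Set A) {a b : A} (h : a ≤ b) : cl X a ≤ cl X b :=
  sInf_le_sInf fun x hx => ⟨hx.1, h.trans hx.2⟩

lemma cl_le_of_mem {X : Set A} {a x : A} (hx : x ∈ X) (h : a ≤ x) : cl X a ≤ x :=
  sInf_le ⟨hx, h⟩

lemma directedOn_image_cl {X : Set A} {D : Set A} (hdir : DirectedOn (· ≤ ·) D) :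
    DirectedOn (· ≤ ·) (cl X '' D) := by
  rintro _ ⟨d, hd, rfl⟩ _ ⟨d', hd', rfl⟩
  obtain ⟨d'', hd'', h1, h2⟩ := hdir d hd d' hd'
  exact ⟨cl X d'', Set.mem_image_of_mem _ hd'', cl_mono X h1, cl_mono X h2⟩

/-- Key lemma: the set of elements which are the meet of their X-closure and Z-closure
is algebraic, assuming upper continuity. -/
lemma decomp_algebraic
    (hUC : ∀ (x : A) (D : Set A), D.Nonempty → DirectedOn (· ≤ ·) D →
      x ⊓ sSup D = ⨆ d ∈ D, x ⊓ d)
    {X Z : Set A} (hX : IsAlgebraicSubset X) (hZ : IsAlgebraicSubset Z) :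
    IsAlgebraicSubset {a : A | cl X a ⊓ cl Z a ≤ a} := by
  constructor
  · intro T hT
    refine le_sInf fun t ht => ?_
    exact le_trans (inf_le_inf (cl_mono _ (sInf_le ht)) (cl_mono _ (sInf_le ht))) (hT ht)
  · intro D hD hne hdir
    have himX : cl X '' D ⊆ X := by rintro _ ⟨d, hd, rfl⟩; exact cl_mem hX d
    have himZ : cl Z '' D ⊆ Z := by rintro _ ⟨d, hd, rfl⟩; exact cl_mem hZ d
    have hb : cl X (sSup D) ≤ sSup (cl X '' D) := by
      refine cl_le_of_mem (hX.2 _ himX (hne.image _) (directedOn_image_cl hdir)) ?_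
      exact sSup_le fun d hd => (le_cl X d).trans (le_sSup (Set.mem_image_of_mem _ hd))
    have hc : cl Z (sSup D) ≤ sSup (cl Z '' D) := by
      refine cl_le_of_mem (hZ.2 _ himZ (hne.image _) (directedOn_image_cl hdir)) ?_
      exact sSup_le fun d hd => (le_cl Z d).trans (le_sSup (Set.mem_image_of_mem _ hd))
    have key : sSup (cl X '' D) ⊓ sSup (cl Z '' D) ≤ sSup D := by
      rw [hUC _ _ (hne.image _) (directedOn_image_cl hdir)]
      refine iSup₂_le fun e he => ?_
      obtain ⟨d, hd, rfl⟩ := he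
      rw [inf_comm, hUC _ _ (hne.image _) (directedOn_image_cl hdir)]
      refine iSup₂_le fun f hf => ?_
      obtain ⟨d', hd', rfl⟩ := hf
      obtain ⟨d'', hd'', h1, h2⟩ := hdir d hd d' hd'
      calc cl Z d ⊓ cl X d' ≤ cl X d'' ⊓ cl Z d'' :=
            le_inf (inf_le_right.trans (cl_mono _ h2)) (inf_le_left.trans (cl_mono _ h1))
        _ ≤ d'' := hD hd''
        _ ≤ sSup D := le_sSup hd''
    exact le_trans (inf_le_inf hb hc) key

lemma le_val {X Y : Sp A} (h : X ≤ Y) : X.val ⊆ Y.val := h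

/-- In `Sp A`, every element of `X ⊔ Z` decomposes as the meet of its closures. -/
lemma decomp
    (hUC : ∀ (x : A) (D : Set A), D.Nonempty → DirectedOn (· ≤ ·) D →
      x ⊓ sSup D = ⨆ d ∈ D, x ⊓ d)
    (X Z : Sp A) {a : A} (ha : a ∈ (X ⊔ Z).val) :
    cl X.val a ⊓ cl Z.val a = a := by
  set S : Sp A := ⟨{a : A | cl X.val a ⊓ cl Z.val a ≤ a}, decomp_algebraic hUC X.2 Z.2⟩ with hS
  have hXS : X ≤ S := by
    intro x hx
    exact inf_le_left.trans (cl_le_of_mem hx le_rfl)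
  have hZS : Z ≤ S := by
    intro z hz
    exact inf_le_right.trans (cl_le_of_mem hz le_rfl)
  have h := le_val (sup_le hXS hZS) ha
  exact le_antisymm h (le_inf (le_cl _ _) (le_cl _ _))

end SpAux

open SpAux

/-- If `A` is an upper continuous complete lattice, then the lattice `Sp A` of
algebraic subsets of `A` is join-semidistributive. -/
theorem sp_joinSemidistributive {A : Type*} [CompleteLattice A]
    (hUC : ∀ (x : A) (D : Set A), D.Nonempty → DirectedOn (· ≤ ·) D →
      x ⊓ sSup D = ⨆ d ∈ D, x ⊓ d) :
    ∀ X Y Z : Sp A, X ⊔ Y = X ⊔ Z → X ⊔ Y = X ⊔ (Y ⊓ Z) := by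
  intro X Y Z h
  have hinf : Y ⊓ Z ≤ Y := inf_le_left
  refine le_antisymm ?_ (sup_le le_sup_left (hinf.trans le_sup_right))
  refine sup_le le_sup_left ?_
  -- show Y ≤ X ⊔ (Y ⊓ Z)
  set V : Sp A := X ⊔ (Y ⊓ Z) with hVdef
  -- the intersection Y.val ∩ Z.val sits inside V.val
  have hYZalg : IsAlgebraicSubset (Y.val ∩ Z.val) := by
    constructor
    · intro S hS
      exact ⟨Y.2.1 S (fun s hs => (hS hs).1), Z.2.1 S (fun s hs => (hS hs).2)⟩
    · intro S hS hne hdir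
      exact ⟨Y.2.2 S (fun s hs => (hS hs).1) hne hdir,
             Z.2.2 S (fun s hs => (hS hs).2) hne hdir⟩
  have hYZV : Y.val ∩ Z.val ⊆ V.val := by
    set W : Sp A := ⟨Y.val ∩ Z.val, hYZalg⟩ with hW
    have h1a : W ≤ Y := fun x hx => hx.1
    have h1b : W ≤ Z := fun x hx => hx.2
    have h1 : W ≤ Y ⊓ Z := le_inf h1a h1b
    exact le_val (h1.trans le_sup_right)
  have hXV : X.val ⊆ V.val := le_val le_sup_left
  -- main argument
  intro y hy
  have hYW : ∀ a, a ∈ Y.val → a ∈ (X ⊔ Z).val := by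
    intro a haY
    exact le_val (h ▸ le_sup_right : Y ≤ X ⊔ Z) haY
  have hZW : ∀ a, a ∈ Z.val → a ∈ (X ⊔ Y).val := by
    intro a haZ
    exact le_val (h ▸ le_sup_right : Z ≤ X ⊔ Y) haZ
  -- the alternating sequence
  set v : ℕ → A := fun n => Nat.rec y (fun _ t => cl Y.val (cl Z.val t)) n with hv
  set w : ℕ → A := fun n => cl Z.val (v n) with hw
  have hvY : ∀ n, v n ∈ Y.val := by
    intro n
    induction n with
    | zero => exact hy
    | succ n _ => exact cl_mem Y.2 _
  have hwZ : ∀ n, w n ∈ Z.val := fun n => cl_mem Z.2 _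
  have hvw : ∀ n, v n ≤ w n := fun n => le_cl _ _
  have hwv : ∀ n, w n ≤ v (n + 1) := fun n => le_cl _ _
  have hvmono : Monotone v := monotone_nat_of_le_succ fun n => (hvw n).trans (hwv n)
  have hyv : ∀ n, y ≤ v n := fun n => hvmono (Nat.zero_le n)
  -- decompositions
  have dv : ∀ n, cl X.val (v n) ⊓ w n = v n := fun n =>
    decomp hUC X Z (hYW _ (hvY n))
  have dw : ∀ n, cl X.val (w n) ⊓ v (n + 1) = w n := fun n =>
    decomp hUC X Y (hZW _ (hwZ n))
  -- the X-part
  set T : Set A := (Set.range fun n => cl X.val (v n)) ∪ (Set.range fun n => cl X.val (w n))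
    with hT
  set x' : A := sInf T with hx'
  have hx'X : x' ∈ X.val := by
    refine X.2.1 T ?_
    rintro t (⟨n, rfl⟩ | ⟨n, rfl⟩)
    · exact cl_mem X.2 _
    · exact cl_mem X.2 _
  have hyx' : y ≤ x' := by
    refine le_sInf ?_
    rintro t (⟨n, rfl⟩ | ⟨n, rfl⟩)
    · exact (hyv n).trans (le_cl _ _)
    · exact ((hyv n).trans (hvw n)).trans (le_cl _ _)
  -- the Y ∩ Z part
  have hvdir : DirectedOn (· ≤ ·) (Set.range v) := hvmono.directed_le.directedOn_range
  set p : A := sSup (Set.range v) with hp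
  have hpY : p ∈ Y.val := Y.2.2 _ (by rintro _ ⟨n, rfl⟩; exact hvY n) ⟨v 0, ⟨0, rfl⟩⟩ hvdir
  have hwmono : Monotone w := fun m n hmn => cl_mono _ (hvmono hmn)
  have hpw : p = sSup (Set.range w) := by
    apply le_antisymm
    · exact sSup_le (by rintro _ ⟨n, rfl⟩; exact (hvw n).trans (le_sSup ⟨n, rfl⟩))
    · exact sSup_le (by rintro _ ⟨n, rfl⟩; exact (hwv n).trans (le_sSup ⟨n + 1, rfl⟩))
  have hpZ : p ∈ Z.val := by
    rw [hpw]
    exact Z.2.2 _ (by rintro _ ⟨n, rfl⟩; exact hwZ n) ⟨w 0, ⟨0, rfl⟩⟩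
      hwmono.directed_le.directedOn_range
  have hyp : y ≤ p := (hyv 0).trans (le_sSup ⟨0, rfl⟩)
  -- the induction
  have claim : ∀ n, x' ⊓ v n ≤ y := by
    intro n
    induction n with
    | zero => exact inf_le_right
    | succ n ih =>
      have h1 : x' ≤ cl X.val (w n) := sInf_le (Or.inr ⟨n, rfl⟩)
      have h2 : x' ≤ cl X.val (v n) := sInf_le (Or.inl ⟨n, rfl⟩)
      calc x' ⊓ v (n + 1) ≤ x' ⊓ (cl X.val (w n) ⊓ v (n + 1)) :=
            le_inf inf_le_left (le_inf (inf_le_left.trans h1) inf_le_right)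
        _ = x' ⊓ w n := by rw [dw n]
        _ ≤ x' ⊓ (cl X.val (v n) ⊓ w n) :=
            le_inf inf_le_left (le_inf (inf_le_left.trans h2) inf_le_right)
        _ = x' ⊓ v n := by rw [dv n]
        _ ≤ y := ih
  have hxp : x' ⊓ p ≤ y := by
    rw [hp, hUC x' (Set.range v) ⟨v 0, ⟨0, rfl⟩⟩ hvdir]
    refine iSup₂_le fun d hd => ?_
    obtain ⟨n, rfl⟩ := hd
    exact claim n
  have hyeq : y = x' ⊓ p := le_antisymm (le_inf hyx' hyp) hxp
  -- conclude
  have hmem : sInf {x', p} ∈ V.val := by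
    refine V.2.1 _ ?_
    rintro t (rfl | rfl)
    · exact hXV hx'X
    · exact hYZV ⟨hpY, hpZ⟩
  rwa [sInf_pair, ← hyeq] at hmem
end

section
/- Let B be a complete Boolean algebra. Then the lattice Sp(B) of algebraic subsets of B is subdirectly irreducible: it has a smallest nonzero lattice congruence, namely the principal congruence collapsing the bottom element {1} with the atom {0,1}. -/
namespace SpAux

variable {A : Type*} [CompleteLattice A]

lemma le_def {X Y : Sp A} : X ≤ Y ↔ X.val ⊆ Y.val := Iff.rfl

lemma top_mem (X : Sp A) : ⊤ ∈ X.val := by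
  have := X.2.1 ∅ (Set.empty_subset _)
  simpa using this

lemma pair_algebraic (a : A) : IsAlgebraicSubset ({a, ⊤} : Set A) := by
  constructor
  · intro S hS
    by_cases h : a ∈ S
    · left
      refine le_antisymm (sInf_le h) (le_sInf fun x hx => ?_)
      rcases hS hx with h' | h'
      · simp [h']
      · rw [Set.mem_singleton_iff] at h'
        simp [h']
    · right
      refine le_antisymm le_top (le_sInf fun x hx => ?_)
      rcases hS hx with h' | h'
      · exact absurd (h' ▸ hx) h
      · rw [Set.mem_singleton_iff] at h'
        simp [h']
  · intro S hS hne _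
    by_cases h : (⊤ : A) ∈ S
    · right
      exact le_antisymm le_top (le_sSup h)
    · left
      obtain ⟨x, hx⟩ := hne
      have hxa : x = a := by
        rcases hS hx with h' | h'
        · exact h'
        · rw [Set.mem_singleton_iff] at h'
          exact absurd (h' ▸ hx) h
      refine le_antisymm (sSup_le fun y hy => ?_) (hxa ▸ le_sSup hx)
      rcases hS hy with h' | h'
      · exact h'.le
      · rw [Set.mem_singleton_iff] at h'
        exact absurd (h' ▸ hy) h

lemma singleton_top_algebraic : IsAlgebraicSubset ({⊤} : Set A) := by
  constructor
  · intro S hS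
    simp only [Set.mem_singleton_iff]
    refine le_antisymm le_top (le_sInf fun x hx => (hS hx).ge)
  · intro S hS hne _
    simp only [Set.mem_singleton_iff]
    obtain ⟨x, hx⟩ := hne
    exact le_antisymm le_top ((hS hx) ▸ le_sSup hx)

lemma bot_val : (⊥ : Sp A).val = ({⊤} : Set A) := by
  let Z : Sp A := ⟨{⊤}, singleton_top_algebraic⟩
  have h1 : (⊥ : Sp A) ≤ Z := bot_le
  have h2 : Z ≤ ⊥ := le_def.mpr (Set.singleton_subset_iff.mpr (top_mem ⊥))
  have : (⊥ : Sp A) = Z := le_antisymm h1 h2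
  rw [this]

lemma inf_val (X Y : Sp A) : (X ⊓ Y).val = X.val ∩ Y.val := by
  have halg : IsAlgebraicSubset (X.val ∩ Y.val) :=
    ⟨fun S hS => ⟨X.2.1 S (hS.trans Set.inter_subset_left),
        Y.2.1 S (hS.trans Set.inter_subset_right)⟩,
     fun S hS hne hd => ⟨X.2.2 S (hS.trans Set.inter_subset_left) hne hd,
        Y.2.2 S (hS.trans Set.inter_subset_right) hne hd⟩⟩
  let Z : Sp A := ⟨X.val ∩ Y.val, halg⟩
  have h1 : Z ≤ X ⊓ Y :=
    le_inf (le_def.mpr Set.inter_subset_left) (le_def.mpr Set.inter_subset_right)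
  have h2 : X ⊓ Y ≤ Z :=
    le_def.mpr (Set.subset_inter (le_def.mp inf_le_left) (le_def.mp inf_le_right))
  have : X ⊓ Y = Z := le_antisymm h2 h1
  rw [this]

lemma inf_mem_sup {X Y : Sp A} {a b : A} (ha : a ∈ X.val) (hb : b ∈ Y.val) :
    a ⊓ b ∈ (X ⊔ Y).val := by
  have hX : X.val ⊆ (X ⊔ Y).val := le_def.mp le_sup_left
  have hY : Y.val ⊆ (X ⊔ Y).val := le_def.mp le_sup_right
  have := (X ⊔ Y).2.1 {a, b} (by
    intro x hx
    rcases hx with h | h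
    · exact h ▸ hX ha
    · rw [Set.mem_singleton_iff] at h
      exact h ▸ hY hb)
  simpa [sInf_pair] using this

end SpAux


/-- A lattice congruence: an equivalence relation compatible with `⊔` and `⊓`. -/
structure LatCon (L : Type*) [Lattice L] where
  r : L → L → Prop
  iseqv : Equivalence r
  sup_comp : ∀ a b c d : L, r a b → r c d → r (a ⊔ c) (b ⊔ d)
  inf_comp : ∀ a b c d : L, r a b → r c d → r (a ⊓ c) (b ⊓ d)

namespace SpAux

/-- From `θ'.r X Y` with `a ∈ X \ Y`, derive `θ'.r ⊥ Uₐ` for the atom `Uₐ = {a, ⊤}`. -/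
lemma collapse_atom {B : Type*} [CompleteLattice B] (θ' : LatCon (Sp B)) {X Y : Sp B}
    (hr : θ'.r X Y) {a : B} (haX : a ∈ X.val) (haY : a ∉ Y.val) :
    θ'.r ⊥ ⟨{a, ⊤}, pair_algebraic a⟩ := by
  set Ua : Sp B := ⟨{a, ⊤}, pair_algebraic a⟩ with hUa
  -- θ'.r (X ⊓ Y) (X ⊔ Y)
  have h1 : θ'.r (X ⊓ Y) (Y ⊓ Y) := θ'.inf_comp _ _ _ _ hr (θ'.iseqv.refl Y)
  have h2 : θ'.r (X ⊔ Y) (Y ⊔ Y) := θ'.sup_comp _ _ _ _ hr (θ'.iseqv.refl Y)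
  rw [inf_idem] at h1
  rw [sup_idem] at h2
  have hMJ : θ'.r (X ⊓ Y) (X ⊔ Y) := θ'.iseqv.trans h1 (θ'.iseqv.symm h2)
  have hkey : θ'.r (Ua ⊓ (X ⊓ Y)) (Ua ⊓ (X ⊔ Y)) :=
    θ'.inf_comp _ _ _ _ (θ'.iseqv.refl Ua) hMJ
  have e1 : Ua ⊓ (X ⊓ Y) = ⊥ := by
    apply Subtype.ext
    rw [inf_val, inf_val, bot_val]
    ext x
    simp only [Set.mem_inter_iff, Set.mem_insert_iff, Set.mem_singleton_iff]
    constructor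
    · rintro ⟨rfl | rfl, hx, hy⟩
      · exact absurd hy haY
      · rfl
    · rintro rfl
      exact ⟨Or.inr rfl, top_mem X, top_mem Y⟩
  have e2 : Ua ⊓ (X ⊔ Y) = Ua := by
    apply inf_eq_left.mpr
    apply le_def.mpr
    intro x hx
    rcases hx with rfl | hx
    · exact le_def.mp le_sup_left haX
    · rw [Set.mem_singleton_iff] at hx
      exact hx ▸ top_mem _
  rwa [e1, e2] at hkey

/-- From `θ'.r ⊥ Uₐ` with `a ≠ ⊤`, in a complete Boolean algebra, derive
`θ'.r ⊥ U₀` where `U₀ = {⊥, ⊤}`. -/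
lemma collapse_bot {B : Type*} [CompleteBooleanAlgebra B] [Nontrivial B]
    (θ' : LatCon (Sp B)) {a : B} (ha : a ≠ ⊤)
    (hr : θ'.r ⊥ ⟨{a, ⊤}, pair_algebraic a⟩) :
    θ'.r ⊥ ⟨{⊥, ⊤}, pair_algebraic ⊥⟩ := by
  set Ua : Sp B := ⟨{a, ⊤}, pair_algebraic a⟩ with hUa
  set U₀ : Sp B := ⟨{⊥, ⊤}, pair_algebraic (⊥ : B)⟩ with hU₀
  by_cases hab : a = ⊥
  · subst hab
    exact hr
  -- a ∉ {⊥, ⊤}; let b = aᶜ, also b ∉ {⊥, ⊤}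
  set b : B := aᶜ with hb
  have hbtop : b ≠ ⊤ := by rw [hb]; exact fun h => hab (compl_eq_top.mp h)
  have hbbot : b ≠ ⊥ := by rw [hb]; exact fun h => ha (compl_eq_bot.mp h)
  set Ub : Sp B := ⟨{b, ⊤}, pair_algebraic b⟩ with hUb
  have h1 : θ'.r (Ub ⊔ ⊥) (Ub ⊔ Ua) := θ'.sup_comp _ _ _ _ (θ'.iseqv.refl Ub) hr
  rw [sup_bot_eq] at h1
  have h2 : θ'.r (U₀ ⊓ Ub) (U₀ ⊓ (Ub ⊔ Ua)) := θ'.inf_comp _ _ _ _ (θ'.iseqv.refl U₀) h1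
  have e1 : U₀ ⊓ Ub = ⊥ := by
    apply Subtype.ext
    rw [inf_val, bot_val]
    ext x
    simp only [Set.mem_inter_iff, Set.mem_insert_iff, Set.mem_singleton_iff]
    constructor
    · rintro ⟨rfl | rfl, h | h⟩
      · exact absurd h.symm hbbot
      · exact absurd h bot_ne_top
      · rfl
      · rfl
    · rintro rfl
      exact ⟨Or.inr rfl, Or.inr rfl⟩
  have e2 : U₀ ⊓ (Ub ⊔ Ua) = U₀ := by
    apply inf_eq_left.mpr
    apply le_def.mpr
    intro x hx
    rcases hx with rfl | hx
    · have : b ⊓ a ∈ (Ub ⊔ Ua).val :=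
        inf_mem_sup (show b ∈ Ub.val from Or.inl rfl) (show a ∈ Ua.val from Or.inl rfl)
      rwa [hb, compl_inf_eq_bot] at this
    · rw [Set.mem_singleton_iff] at hx
      exact hx ▸ top_mem _
  rwa [e1, e2] at h2

end SpAux

/-- For a nontrivial complete Boolean algebra `B`, the lattice `Sp B` of algebraic
subsets of `B` is subdirectly irreducible: it has a smallest nonzero congruence,
namely the principal congruence `Θ(⊥, U₀)` collapsing the bottom element of
`Sp B` with the atom `U₀ = {⊥, ⊤}`. -/
theorem sp_subdirectlyIrreducible {B : Type*} [CompleteBooleanAlgebra B] [Nontrivial B] :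
    ∃ θ : LatCon (Sp B),
      (∃ U₀ : Sp B, U₀.val = {⊥, ⊤} ∧ θ.r ⊥ U₀ ∧
        ∀ θ' : LatCon (Sp B), θ'.r ⊥ U₀ → ∀ X Y : Sp B, θ.r X Y → θ'.r X Y) ∧
      (∃ X Y : Sp B, X ≠ Y ∧ θ.r X Y) ∧
      ∀ θ' : LatCon (Sp B), (∃ X Y : Sp B, X ≠ Y ∧ θ'.r X Y) →
        ∀ X Y : Sp B, θ.r X Y → θ'.r X Y := by
  classical
  set U₀ : Sp B := ⟨{⊥, ⊤}, SpAux.pair_algebraic (⊥ : B)⟩ with hU₀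
  -- every congruence with a nontrivial pair collapses (⊥, U₀)
  have core : ∀ θ' : LatCon (Sp B), (∃ X Y : Sp B, X ≠ Y ∧ θ'.r X Y) → θ'.r ⊥ U₀ := by
    rintro θ' ⟨X, Y, hne, hr⟩
    have hvalne : X.val ≠ Y.val := fun h => hne (Subtype.ext h)
    have : ∃ a : B, ¬(a ∈ X.val ↔ a ∈ Y.val) := by
      by_contra h
      push_neg at h
      exact hvalne (Set.ext h)
    obtain ⟨a, haiff⟩ := this
    have hatop : a ≠ ⊤ := by
      rintro rfl
      exact haiff ⟨fun _ => SpAux.top_mem Y, fun _ => SpAux.top_mem X⟩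
    by_cases haX : a ∈ X.val <;> by_cases haY : a ∈ Y.val
    · exact absurd (iff_of_true haX haY) haiff
    · exact SpAux.collapse_bot θ' hatop (SpAux.collapse_atom θ' hr haX haY)
    · exact SpAux.collapse_bot θ' hatop
        (SpAux.collapse_atom θ' (θ'.iseqv.symm hr) haY haX)
    · exact absurd (iff_of_false haX haY) haiff
  have hbotne : (⊥ : Sp B) ≠ U₀ := by
    intro h
    have : (⊥ : B) ∈ (⊥ : Sp B).val := h ▸ Or.inl rfl
    rw [SpAux.bot_val] at this
    exact bot_ne_top (Set.mem_singleton_iff.mp this)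
  refine ⟨⟨fun X Y => ∀ θ' : LatCon (Sp B), θ'.r ⊥ U₀ → θ'.r X Y,
      ⟨fun X θ' _ => θ'.iseqv.refl X,
       fun h θ' hb => θ'.iseqv.symm (h θ' hb),
       fun h1 h2 θ' hb => θ'.iseqv.trans (h1 θ' hb) (h2 θ' hb)⟩,
      fun a b c d h1 h2 θ' hb => θ'.sup_comp a b c d (h1 θ' hb) (h2 θ' hb),
      fun a b c d h1 h2 θ' hb => θ'.inf_comp a b c d (h1 θ' hb) (h2 θ' hb)⟩,
    ⟨U₀, rfl, fun θ' hb => hb, fun θ' hb X Y h => h θ' hb⟩,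
    ⟨⊥, U₀, hbotne, fun θ' hb => hb⟩,
    fun θ' hex X Y h => h θ' (core θ' hex)⟩
end
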